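/- Let 0 < a < b, let Θ, A, B, γ₁, γ₂, c₀, c₁, c₂ ∈ ℝ with γ₁ ≠ γ₂, and define φ(x) = Ax^{γ₁} + Bx^{γ₂} + c₂x² + c₁x + c₀ for x > 0. Suppose φ(a) = φ(b) = Θ, φ'(a) = φ'(b) = 0, and there exists α ∈ (a,b) with φ(α) < Θ. Then φ(x) ≤ Θ for every x ∈ [a,b]. -/

import Mathlib

open Set

/-- A generalized polynomial (finite linear combination of real power functions) with
`n` positive zeros listed by a strictly monotone map vanishes on all of `(0, ∞)`. -/
lemma genpoly_eq_zero : ∀ (n : ℕ) (e c z : Fin n → ℝ), StrictMono z → (∀ i, 0 < z i) →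
    (∀ i, ∑ j, c j * z i ^ e j = 0) → ∀ x : ℝ, 0 < x → ∑ j, c j * x ^ e j = 0 := by
  intro n
  induction n with
  | zero => intro e c z _ _ _ x hx; simp
  | succ n ih =>
    intro e c z hz hzpos hzero
    set g : ℝ → ℝ := fun x => ∑ j, c j * x ^ (e j - e 0) with hgdef
    set g' : ℝ → ℝ :=
      fun x => ∑ j : Fin n, (c j.succ * (e j.succ - e 0)) * x ^ (e j.succ - e 0 - 1) with hg'def
    have hfg : ∀ x : ℝ, 0 < x → (∑ j, c j * x ^ e j) = x ^ e 0 * g x := by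
      intro x hx
      rw [hgdef, Finset.mul_sum]
      refine Finset.sum_congr rfl fun j _ => ?_
      rw [mul_left_comm, ← Real.rpow_add hx, show e 0 + (e j - e 0) = e j by ring]
    have hgz : ∀ i, g (z i) = 0 := by
      intro i
      have h := hzero i
      rw [hfg (z i) (hzpos i)] at h
      exact (mul_eq_zero.mp h).resolve_left (Real.rpow_pos_of_pos (hzpos i) (e 0)).ne'
    have hgderiv : ∀ x : ℝ, 0 < x → HasDerivAt g (g' x) x := by
      intro x hx
      have h : HasDerivAt g (∑ j : Fin (n+1), c j * ((e j - e 0) * x ^ (e j - e 0 - 1))) x :=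
        HasDerivAt.fun_sum fun j _ =>
          (Real.hasDerivAt_rpow_const (Or.inl hx.ne')).const_mul (c j)
      have heq : (∑ j : Fin (n+1), c j * ((e j - e 0) * x ^ (e j - e 0 - 1))) = g' x := by
        rw [Fin.sum_univ_succ, sub_self, zero_mul, mul_zero, zero_add, hg'def]
        exact Finset.sum_congr rfl fun j _ => by ring
      exact heq ▸ h
    have hgcont : ∀ u v : ℝ, 0 < u → ContinuousOn g (Icc u v) := fun u v hu x hx =>
      ((hgderiv x (lt_of_lt_of_le hu hx.1)).continuousAt).continuousWithinAt
    have hw : ∀ i : Fin n, ∃ w ∈ Ioo (z i.castSucc) (z i.succ), g' w = 0 := by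
      intro i
      have hlt : z i.castSucc < z i.succ := hz (Fin.castSucc_lt_succ (i := i))
      obtain ⟨w, hwI, hw0⟩ := exists_hasDerivAt_eq_slope g g' hlt
        (hgcont _ _ (hzpos _))
        (fun x hx => hgderiv x (lt_trans (hzpos _) hx.1))
      refine ⟨w, hwI, ?_⟩
      rw [hgz, hgz, sub_zero, zero_div] at hw0
      exact hw0
    choose w hw1 hw2 using hw
    have hwmono : StrictMono w := by
      intro i j hij
      calc w i < z i.succ := (hw1 i).2
        _ ≤ z j.castSucc := hz.monotone (by
            rw [Fin.le_def]
            simpa [Nat.succ_le_iff] using hij)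
        _ < w j := (hw1 j).1
    have hwpos : ∀ i, 0 < w i := fun i => lt_trans (hzpos _) (hw1 i).1
    have hIH := ih (fun j => e j.succ - e 0 - 1) (fun j => c j.succ * (e j.succ - e 0)) w
      hwmono hwpos hw2
    -- so g' vanishes on (0, ∞); hence g is constant there, so g = 0 there
    have hg'zero : ∀ x : ℝ, 0 < x → g' x = 0 := hIH
    have hgzero : ∀ x : ℝ, 0 < x → g x = 0 := by
      intro x hx
      rcases lt_trichotomy x (z 0) with h | h | h
      · obtain ⟨t, ht, hslope⟩ := exists_hasDerivAt_eq_slope g g' h (hgcont _ _ hx)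
          (fun y hy => hgderiv y (lt_trans hx hy.1))
        rw [hg'zero t (lt_trans hx ht.1), hgz 0] at hslope
        have hne : z 0 - x ≠ 0 := sub_ne_zero.2 h.ne'
        field_simp at hslope
        linarith
      · rw [h]; exact hgz 0
      · obtain ⟨t, ht, hslope⟩ := exists_hasDerivAt_eq_slope g g' h (hgcont _ _ (hzpos 0))
          (fun y hy => hgderiv y (lt_trans (hzpos 0) hy.1))
        rw [hg'zero t (lt_trans (hzpos 0) ht.1), hgz 0] at hslope
        have hne : x - z 0 ≠ 0 := sub_ne_zero.2 h.ne'
        field_simp at hslope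
        linarith
    intro x hx
    rw [hfg x hx, hgzero x hx, mul_zero]

/-- Verification of the second quasi-variational inequality: the candidate value function
`φ(x) = Ax^{γ₁} + Bx^{γ₂} + c₂x² + c₁x + c₀` with `φ(a) = φ(b) = Θ`, `φ'(a) = φ'(b) = 0`
and `φ(α) < Θ` for some `α ∈ (a,b)` satisfies `φ ≤ Θ` on all of `[a,b]`. -/
theorem candidate_value_function_le_theta
    (a b Θ A B γ₁ γ₂ c₀ c₁ c₂ : ℝ) (ha : 0 < a) (hab : a < b) (hγ : γ₁ ≠ γ₂)
    (φ : ℝ → ℝ)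
    (hφ : ∀ x : ℝ, x > 0 → φ x = A * x ^ γ₁ + B * x ^ γ₂ + c₂ * x^2 + c₁ * x + c₀)
    (hφa : φ a = Θ) (hφb : φ b = Θ)
    (hφ'a : deriv φ a = 0) (hφ'b : deriv φ b = 0)
    (α : ℝ) (hα : α ∈ Set.Ioo a b) (hφα : φ α < Θ) :
    ∀ x ∈ Set.Icc a b, φ x ≤ Θ := by
  set F' : ℝ → ℝ := fun x => A * γ₁ * x ^ (γ₁ - 1) + B * γ₂ * x ^ (γ₂ - 1) + 2 * c₂ * x + c₁
    with hF'def
  have hφderiv : ∀ x : ℝ, 0 < x → HasDerivAt φ (F' x) x := by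
    intro x hx
    have hA := (Real.hasDerivAt_rpow_const (p := γ₁) (Or.inl hx.ne')).const_mul A
    have hB := (Real.hasDerivAt_rpow_const (p := γ₂) (Or.inl hx.ne')).const_mul B
    have hsq : HasDerivAt (fun x : ℝ => c₂ * x ^ 2) (c₂ * (2 * x)) x := by
      simpa using (hasDerivAt_pow 2 x).const_mul c₂
    have hlin : HasDerivAt (fun x : ℝ => c₁ * x) c₁ x := by
      simpa using (hasDerivAt_id x).const_mul c₁
    have h1 : HasDerivAt (fun x : ℝ => A * x ^ γ₁ + B * x ^ γ₂ + c₂ * x^2 + c₁ * x + c₀)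
        (F' x) x := by
      have := (((hA.add hB).add hsq).add hlin).add_const c₀
      exact this.congr_deriv (by rw [hF'def]; ring)
    refine h1.congr_of_eventuallyEq ?_
    exact Filter.eventuallyEq_of_mem (isOpen_Ioi.mem_nhds hx) (fun y hy => hφ y hy)
  have hcont : ContinuousOn φ (Icc a b) := fun x hx =>
    ((hφderiv x (lt_of_lt_of_le ha hx.1)).continuousAt).continuousWithinAt
  have hF'a : F' a = 0 := by rw [← (hφderiv a ha).deriv]; exact hφ'a
  have hF'b : F' b = 0 := by rw [← (hφderiv b (ha.trans hab)).deriv]; exact hφ'b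
  intro x₀ hx₀
  by_contra hgt
  push_neg at hgt
  have hx₀a : a < x₀ := lt_of_le_of_ne hx₀.1 (fun heq => by rw [← heq, hφa] at hgt; linarith)
  have hx₀b : x₀ < b := lt_of_le_of_ne hx₀.2 (fun heq => by rw [heq, hφb] at hgt; linarith)
  -- a point z strictly inside (a,b) where φ z = Θ
  have hzex : ∃ z ∈ Ioo a b, φ z = Θ := by
    have hne : α ≠ x₀ := fun h' => by rw [h'] at hφα; linarith
    rcases hne.lt_or_gt with hlt | hlt
    · have hsub : Icc α x₀ ⊆ Icc a b := Icc_subset_Icc hα.1.le hx₀b.le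
      have := intermediate_value_Ioo hlt.le (hcont.mono hsub)
      obtain ⟨z, hz1, hz2⟩ := this ⟨hφα, hgt⟩
      exact ⟨z, ⟨lt_trans hα.1 hz1.1, lt_trans hz1.2 hx₀b⟩, hz2⟩
    · have hsub : Icc x₀ α ⊆ Icc a b := Icc_subset_Icc hx₀a.le hα.2.le
      have := intermediate_value_Ioo' hlt.le (hcont.mono hsub)
      obtain ⟨z, hz1, hz2⟩ := this ⟨hφα, hgt⟩
      exact ⟨z, ⟨lt_trans hx₀a hz1.1, lt_trans hz1.2 hα.2⟩, hz2⟩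
  obtain ⟨z, hz, hφz⟩ := hzex
  -- Rolle on [a,z] and [z,b]
  obtain ⟨r₁, hr₁, hr₁0⟩ := exists_hasDerivAt_eq_slope φ F' hz.1
    (hcont.mono (Icc_subset_Icc le_rfl hz.2.le))
    (fun y hy => hφderiv y (lt_trans ha hy.1))
  rw [hφz, hφa, sub_self, zero_div] at hr₁0
  obtain ⟨r₂, hr₂, hr₂0⟩ := exists_hasDerivAt_eq_slope φ F' hz.2
    (hcont.mono (Icc_subset_Icc hz.1.le le_rfl))
    (fun y hy => hφderiv y (lt_trans (lt_trans ha hz.1) hy.1))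
  rw [hφb, hφz, sub_self, zero_div] at hr₂0
  -- F' is a 4-term generalized polynomial with 4 positive zeros a < r₁ < r₂ < b
  have hsum : ∀ x : ℝ,
      (∑ j, (![A * γ₁, B * γ₂, 2 * c₂, c₁]) j * x ^ (![γ₁ - 1, γ₂ - 1, 1, 0] : Fin 4 → ℝ) j)
        = F' x := by
    intro x
    rw [Fin.sum_univ_four]
    simp [Real.rpow_one, Real.rpow_zero, hF'def]
  have har₁ : 0 < r₁ := lt_trans ha hr₁.1
  have har₂ : 0 < r₂ := lt_trans har₁ (lt_trans hr₁.2 hr₂.1)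
  have hzmono : StrictMono (![a, r₁, r₂, b] : Fin 4 → ℝ) := by
    intro i j hij
    fin_cases i <;> fin_cases j <;>
      simp_all (config := {decide := true}) [Fin.lt_def] <;> linarith [hr₁.1, hr₁.2, hr₂.1, hr₂.2]
  have hzpos : ∀ i, 0 < (![a, r₁, r₂, b] : Fin 4 → ℝ) i := by
    intro i; fin_cases i <;> simp <;> linarith [ha.trans hab]
  have hzero : ∀ i, ∑ j, (![A * γ₁, B * γ₂, 2 * c₂, c₁]) j *
      (![a, r₁, r₂, b] : Fin 4 → ℝ) i ^ (![γ₁ - 1, γ₂ - 1, 1, 0] : Fin 4 → ℝ) j = 0 := by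
    intro i
    fin_cases i <;> simp only [Matrix.cons_val_zero, Matrix.cons_val_one, Matrix.head_cons] <;>
      rw [hsum] <;> first
        | exact hF'a
        | exact hr₁0
        | exact hr₂0
        | exact hF'b
  have hkey : ∀ x : ℝ, 0 < x → F' x = 0 := by
    intro x hx
    rw [← hsum x]
    exact genpoly_eq_zero 4 _ _ _ hzmono hzpos hzero x hx
  -- then φ is constant on (0,∞), contradicting φ α < Θ = φ a
  obtain ⟨t, ht, hslope⟩ := exists_hasDerivAt_eq_slope φ F' hα.1
    (hcont.mono (Icc_subset_Icc le_rfl hα.2.le))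
    (fun y hy => hφderiv y (lt_trans ha hy.1))
  rw [hkey t (lt_trans ha ht.1)] at hslope
  have hne : α - a ≠ 0 := sub_ne_zero.2 hα.1.ne'
  field_simp at hslope
  rw [hφa] at hslope
  linarith
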